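/- Let B and C be L-algebras in a functional language L. If every existential sentence true in C is true in B (Th_∃(B) ⊇ Th_∃(C)), then C is isomorphic to a limit algebra over B, i.e., C ≅ L(Λ) for some direct system Λ of diagram-formulas each of which is realizable in B. -/

import Mathlib

open FirstOrder Language Structure

universe u v w x

namespace UAG

variable {L : FirstOrder.Language}

/-- A direct system of diagram-formulas in the functional language `L`, encoded semantically.
A diagram-formula over a finite variable set `X i` and a finite reduct (recorded by `Fs i`)
declares all variables pairwise distinct, and for every listed operation symbol `f` and tuple of
variables `x̄` either a conjunct `f(x̄) = y` (recorded by `op i f _ x̄ = some y`) or the conjuncts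
`¬ f(x̄) = y` for all variables `y` (recorded by `op i f _ x̄ = none`).  The maps `γ` are the
transition maps of the system; the compatibility axioms state that the conjuncts of
`φ_i(γ_{ij}(X_i))` are conjuncts of `φ_j`, every constant of `L` is eventually named, and every
operation symbol applied to variables is eventually evaluated. -/
structure DiagramSystem (L : FirstOrder.Language.{u, v}) (I : Type w) [Preorder I] where
  directed : ∀ i j : I, ∃ k, i ≤ k ∧ j ≤ k
  X : I → Type x
  finX : ∀ i, Finite (X i)
  γ : ∀ {i j : I}, i ≤ j → X i → X j
  γ_rfl : ∀ (i : I) (x : X i), γ (le_refl i) x = x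
  γ_comp : ∀ {i j k : I} (hij : i ≤ j) (hjk : j ≤ k) (x : X i),
    γ hjk (γ hij x) = γ (le_trans hij hjk) x
  γ_inj : ∀ {i j : I} (hij : i ≤ j), Function.Injective (γ hij)
  Fs : ∀ _ : I, ∀ n : ℕ, Set (L.Functions n)
  finFs : ∀ i, Set.Finite {q : Σ n, L.Functions n | q.2 ∈ Fs i q.1}
  mono : ∀ {i j : I}, i ≤ j → ∀ {n} (f : L.Functions n), f ∈ Fs i n → f ∈ Fs j n
  op : ∀ (i : I) {n} (f : L.Functions n), f ∈ Fs i n → (Fin n → X i) → Option (X i)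
  op_mono_some : ∀ {i j : I} (hij : i ≤ j) {n} (f : L.Functions n) (hf : f ∈ Fs i n)
    (x : Fin n → X i) (y : X i), op i f hf x = some y →
      op j f (mono hij f hf) (fun k => γ hij (x k)) = some (γ hij y)
  op_mono_none : ∀ {i j : I} (hij : i ≤ j) {n} (f : L.Functions n) (hf : f ∈ Fs i n)
    (x : Fin n → X i), op i f hf x = none →
      ∀ y : X i, op j f (mono hij f hf) (fun k => γ hij (x k)) ≠ some (γ hij y)
  const_total : ∀ c : L.Constants, ∃ (i : I) (hc : c ∈ Fs i 0) (y : X i),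
      op i c hc (fun k => k.elim0) = some y
  op_total : ∀ (i : I) {n} (f : L.Functions n) (x : Fin n → X i),
      ∃ (j : I) (hij : i ≤ j) (hf : f ∈ Fs j n) (y : X j),
        op j f hf (fun k => γ hij (x k)) = some y

namespace DiagramSystem

variable {I : Type w} [Preorder I] (Λ : DiagramSystem L I)

/-- Two pairs `(x, i)` and `(y, j)` are identified in the limit iff the variables are eventually
mapped to the same variable. -/
def rel : (Σ i, Λ.X i) → (Σ i, Λ.X i) → Prop :=
  fun a b => ∃ (k : I) (hik : a.1 ≤ k) (hjk : b.1 ≤ k), Λ.γ hik a.2 = Λ.γ hjk b.2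

theorem rel_equivalence : Equivalence Λ.rel := by
  constructor
  · exact fun a => ⟨a.1, le_refl _, le_refl _, rfl⟩
  · rintro a b ⟨k, h1, h2, e⟩; exact ⟨k, h2, h1, e.symm⟩
  · rintro a b c ⟨k₁, h1, h2, e1⟩ ⟨k₂, h3, h4, e2⟩
    obtain ⟨m, hm1, hm2⟩ := Λ.directed k₁ k₂
    refine ⟨m, le_trans h1 hm1, le_trans h4 hm2, ?_⟩
    have e1' := congrArg (Λ.γ hm1) e1
    have e2' := congrArg (Λ.γ hm2) e2
    rw [Λ.γ_comp, Λ.γ_comp] at e1'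
    rw [Λ.γ_comp, Λ.γ_comp] at e2'
    exact e1'.trans e2'

/-- The setoid underlying the limit algebra. -/
def limSetoid : Setoid (Σ i, Λ.X i) := ⟨Λ.rel, Λ.rel_equivalence⟩

/-- The underlying set of the limit algebra `L(Λ)`. -/
def Limit : Type _ := Quotient Λ.limSetoid

/-- A witness for the value of an operation on the limit algebra. -/
def FunWitness {n : ℕ} (f : L.Functions n) (x : Fin n → Λ.Limit) (q : Σ i, Λ.X i) : Prop :=
  ∃ (hf : f ∈ Λ.Fs q.1 n) (g : Fin n → Λ.X q.1),
    (∀ k, Quotient.mk Λ.limSetoid ⟨q.1, g k⟩ = x k) ∧ Λ.op q.1 f hf g = some q.2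

theorem exists_funWitness {n : ℕ} (f : L.Functions n) (x : Fin n → Λ.Limit) :
    ∃ q, Λ.FunWitness f x q := by
  rcases n with _ | m
  · obtain ⟨i, hc, y, hy⟩ := Λ.const_total f
    exact ⟨⟨i, y⟩, hc, fun k => k.elim0, fun k => k.elim0, hy⟩
  · classical
    set rep : Fin (m + 1) → Σ i, Λ.X i := fun k => (x k).out with hrep
    haveI : Nonempty I := ⟨(rep 0).1⟩
    haveI : IsDirected I (· ≤ ·) := ⟨Λ.directed⟩
    obtain ⟨j₀, hj₀⟩ := (Finset.univ.image fun k => (rep k).1).exists_le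
    have hle : ∀ k, (rep k).1 ≤ j₀ := fun k =>
      hj₀ _ (Finset.mem_image_of_mem _ (Finset.mem_univ k))
    obtain ⟨j, hj, hf, y, hy⟩ := Λ.op_total j₀ f (fun k => Λ.γ (hle k) (rep k).2)
    refine ⟨⟨j, y⟩, hf, fun k => Λ.γ hj (Λ.γ (hle k) (rep k).2), fun k => ?_, hy⟩
    rw [← (x k).out_eq]
    exact Quotient.sound
      ⟨j, le_refl j, le_trans (hle k) hj, by simp only [Λ.γ_rfl, Λ.γ_comp] <;> rfl⟩

/-- The `L`-structure on the limit algebra `L(Λ)`. -/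
noncomputable def limitStructure : L.Structure Λ.Limit where
  funMap {n} f x := Quotient.mk Λ.limSetoid (Λ.exists_funWitness f x).choose
  RelMap {n} _ _ := False

/-- The diagram-formula `φ_i` of the system is realized in the `L`-algebra `B`:
there is an assignment of the variables of `X i` in `B` making all the conjuncts true. -/
def Realizes (i : I) (B : Type*) [L.Structure B] : Prop :=
  ∃ h : Λ.X i → B, Function.Injective h ∧
    ∀ {n : ℕ} (f : L.Functions n) (hf : f ∈ Λ.Fs i n) (x : Fin n → Λ.X i),
      (∀ y : Λ.X i, Λ.op i f hf x = some y → funMap f (fun k => h (x k)) = h y) ∧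
      (Λ.op i f hf x = none → ∀ y : Λ.X i, funMap f (fun k => h (x k)) ≠ h y)




end DiagramSystem

section Canonical

/-! ### Auxiliary constructions for the canonical direct system -/

/-- Conjunction of a list of bounded formulas. -/
def listConj {L : FirstOrder.Language.{u, v}} {α : Type*} {n : ℕ}
    (l : List (L.BoundedFormula α n)) : L.BoundedFormula α n :=
  l.foldr (· ⊓ ·) ⊤

theorem realize_listConj {L : FirstOrder.Language.{u, v}} {M : Type*} [L.Structure M]
    {α : Type*} {n : ℕ} {l : List (L.BoundedFormula α n)} {v : α → M} {xs : Fin n → M} :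
    (listConj l).Realize v xs ↔ ∀ φ ∈ l, φ.Realize v xs := by
  induction l with
  | nil => simp [listConj]
  | cons a l ih => simp [listConj, BoundedFormula.realize_inf, ih, List.foldr_cons]

theorem isQF_listConj {L : FirstOrder.Language.{u, v}} {α : Type*} {n : ℕ}
    {l : List (L.BoundedFormula α n)} (h : ∀ φ ∈ l, φ.IsQF) : (listConj l).IsQF := by
  induction l with
  | nil => exact BoundedFormula.IsQF.top
  | cons a l ih =>
      exact (h a List.mem_cons_self).inf
        (ih fun φ hφ => h φ (List.mem_cons_of_mem _ hφ))

variable {L : FirstOrder.Language.{u, v}}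

/-- The index type of the canonical direct system: pairs of a finite set of elements of `C`
and a finite set of function symbols. -/
abbrev CIdx (L : FirstOrder.Language.{u, v}) (C : Type x) : Type max u x :=
  Finset C × Finset (Σ n, L.Functions n)

open scoped Classical in
/-- The partial evaluation of operations in the canonical system: `f(x̄)` is defined iff its
value in `C` belongs to the chosen finite set of elements. -/
noncomputable def canonOp (C : Type x) [L.Structure C] (i : CIdx L C)
    {n : ℕ} (f : L.Functions n) (x : Fin n → {c : C // c ∈ i.1}) :
    Option {c : C // c ∈ i.1} :=
  if h : (funMap f fun k => (x k).1) ∈ i.1 then some ⟨_, h⟩ else none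

theorem canonOp_val {C : Type x} [L.Structure C] {i : CIdx L C} {n : ℕ} {f : L.Functions n}
    {x : Fin n → {c : C // c ∈ i.1}} {y : {c : C // c ∈ i.1}}
    (h : canonOp C i f x = some y) : (y : C) = funMap f fun k => (x k).1 := by
  rw [canonOp] at h
  split at h
  next h' => exact (congrArg Subtype.val (Option.some.inj h)).symm
  next h' => exact nomatch h

theorem canonOp_eq_some {C : Type x} [L.Structure C] {i : CIdx L C} {n : ℕ}
    {f : L.Functions n} {x : Fin n → {c : C // c ∈ i.1}}
    (h : (funMap f fun k => (x k).1) ∈ i.1) : canonOp C i f x = some ⟨_, h⟩ := by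
  rw [canonOp]
  split
  next h' => rfl
  next h' => exact absurd h h'

theorem canonOp_none {C : Type x} [L.Structure C] {i : CIdx L C} {n : ℕ}
    {f : L.Functions n} {x : Fin n → {c : C // c ∈ i.1}}
    (h : canonOp C i f x = none) : (funMap f fun k => (x k).1) ∉ i.1 := by
  rw [canonOp] at h
  split at h
  next h' => exact nomatch h
  next h' => exact h'

/-- The canonical direct system of diagram-formulas built from `C`. -/
noncomputable def canonSystem (C : Type x) [L.Structure C] :
    DiagramSystem L (CIdx L C) where
  directed i j := by
    classical
    exact ⟨(i.1 ∪ j.1, i.2 ∪ j.2),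
      ⟨Finset.subset_union_left, Finset.subset_union_left⟩,
      ⟨Finset.subset_union_right, Finset.subset_union_right⟩⟩
  X i := {c : C // c ∈ i.1}
  finX i := Finite.of_fintype _
  γ h x := ⟨x.1, h.1 x.2⟩
  γ_rfl i x := rfl
  γ_comp hij hjk x := rfl
  γ_inj := by
    intro i j hij a b h
    have hval := congrArg Subtype.val h
    exact Subtype.ext hval
  Fs i n := {f | (⟨n, f⟩ : Σ n, L.Functions n) ∈ i.2}
  finFs i := i.2.finite_toSet.subset fun q hq => hq
  mono := by
    intro i j hij n f hf
    exact hij.2 hf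
  op := fun i {n} f _ x => canonOp C i f x
  op_mono_some := by
    intro i j hij n f hf x y h
    have hv : (y : C) = funMap f fun k => (x k).1 := canonOp_val h
    have hm0 : (funMap f fun k => ((x k) : C)) ∈ i.1 := by rw [← hv]; exact y.2
    have hm : (funMap f fun k => ((⟨(x k).1, hij.1 (x k).2⟩ :
        {c : C // c ∈ j.1})).1) ∈ j.1 := hij.1 hm0
    show canonOp C j f (fun k => (⟨(x k).1, hij.1 (x k).2⟩ : {c : C // c ∈ j.1}))
      = some ⟨y.1, hij.1 y.2⟩
    exact (canonOp_eq_some hm).trans (congrArg some (Subtype.ext hv.symm))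
  op_mono_none := by
    intro i j hij n f hf x h y hcon
    have hv : ((⟨y.1, hij.1 y.2⟩ : {c : C // c ∈ j.1}) : C)
        = funMap f fun k => ((⟨(x k).1, hij.1 (x k).2⟩ : {c : C // c ∈ j.1})).1 :=
      canonOp_val hcon
    have hy : (funMap f fun k => ((x k) : C)) ∈ i.1 := by
      have := hv.symm
      rw [show (((⟨y.1, hij.1 y.2⟩ : {c : C // c ∈ j.1})) : C) = (y : C) from rfl] at this
      rw [show (funMap f fun k => ((⟨(x k).1, hij.1 (x k).2⟩ :
        {c : C // c ∈ j.1})).1) = funMap f fun k => ((x k) : C) from rfl] at this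
      rw [this]
      exact y.2
    exact canonOp_none h hy
  const_total := by
    classical
    intro c
    refine ⟨({funMap (M := C) c fun k : Fin 0 => k.elim0}, {⟨0, c⟩}),
      Finset.mem_singleton_self _, ?_⟩
    have hm : (funMap (M := C) c fun k : Fin 0 =>
        ((fun j : Fin 0 => (Fin.elim0 j :
          {c' : C // c' ∈ ({funMap (M := C) c fun k : Fin 0 => k.elim0} : Finset C)})) k).1)
        ∈ ({funMap (M := C) c fun k : Fin 0 => k.elim0} : Finset C) :=
      Finset.mem_singleton.mpr (congrArg (funMap c) (funext fun k => Fin.elim0 k))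
    refine ⟨⟨_, hm⟩, ?_⟩
    exact canonOp_eq_some
      (i := ({funMap (M := C) c fun k : Fin 0 => k.elim0}, {⟨0, c⟩})) hm
  op_total := by
    classical
    intro i n f x
    refine ⟨(i.1 ∪ {funMap (M := C) f fun k => (x k).1}, i.2 ∪ {⟨n, f⟩}),
      ⟨Finset.subset_union_left, Finset.subset_union_left⟩,
      Finset.mem_union_right _ (Finset.mem_singleton_self _), ?_⟩
    have hm : (funMap (M := C) f fun k => (x k).1)
        ∈ i.1 ∪ {funMap (M := C) f fun k => (x k).1} :=
      Finset.mem_union_right _ (Finset.mem_singleton_self _)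
    refine ⟨⟨_, hm⟩, ?_⟩
    exact canonOp_eq_some
      (i := (i.1 ∪ {funMap (M := C) f fun k => (x k).1}, i.2 ∪ {⟨n, f⟩})) hm

variable (C : Type x) [L.Structure C]

/-- The term naming the variable corresponding to `a`. -/
noncomputable def tvar (i : CIdx L C) (a : {c : C // c ∈ i.1}) :
    L.Term (Empty ⊕ Fin (Fintype.card {c : C // c ∈ i.1})) :=
  Term.var (Sum.inr (Fintype.equivFin _ a))

open scoped Classical in
/-- The conjuncts of the diagram-formula expressing distinctness of variables. -/
noncomputable def distList (i : CIdx L C) :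
    List (L.BoundedFormula Empty (Fintype.card {c : C // c ∈ i.1})) :=
  (Finset.univ : Finset ({c : C // c ∈ i.1} × {c : C // c ∈ i.1})).toList.map fun p =>
    if p.1 = p.2 then ⊤ else (Term.bdEqual (tvar C i p.1) (tvar C i p.2)).not

open scoped Classical in
/-- The conjuncts of the diagram-formula expressing the action of the listed operations. -/
noncomputable def opList (i : CIdx L C) :
    List (L.BoundedFormula Empty (Fintype.card {c : C // c ∈ i.1})) :=
  i.2.attach.toList.flatMap fun a =>
    ((Finset.univ :
        Finset ((Fin a.1.1 → {c : C // c ∈ i.1}) × {c : C // c ∈ i.1})).toList).map fun p =>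
      if canonOp C i a.1.2 p.1 = some p.2 then
        Term.bdEqual (Term.func a.1.2 fun k => tvar C i (p.1 k)) (tvar C i p.2)
      else
        (Term.bdEqual (Term.func a.1.2 fun k => tvar C i (p.1 k)) (tvar C i p.2)).not

/-- The diagram-formula of the index `i` of the canonical system. -/
noncomputable def diagFml (i : CIdx L C) :
    L.BoundedFormula Empty (Fintype.card {c : C // c ∈ i.1}) :=
  listConj (distList C i ++ opList C i)

theorem diagFml_isQF (i : CIdx L C) : (diagFml C i).IsQF := by
  refine isQF_listConj ?_
  intro ψ hψ
  rw [List.mem_append] at hψ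
  unfold distList opList at hψ
  rcases hψ with h | h
  · obtain ⟨p, -, rfl⟩ := List.mem_map.mp h
    split_ifs
    · exact BoundedFormula.IsQF.top
    · exact (BoundedFormula.IsAtomic.equal _ _).isQF.not
  · obtain ⟨a, -, h⟩ := List.mem_flatMap.mp h
    obtain ⟨p, -, rfl⟩ := List.mem_map.mp h
    split_ifs
    · exact (BoundedFormula.IsAtomic.equal _ _).isQF
    · exact (BoundedFormula.IsAtomic.equal _ _).isQF.not

theorem diagFml_realize_self (i : CIdx L C) (v : Empty → C) :
    (diagFml C i).Realize v
      (fun k => ((Fintype.equivFin {c : C // c ∈ i.1}).symm k : C)) := by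
  rw [diagFml, realize_listConj]
  intro ψ hψ
  rw [List.mem_append] at hψ
  unfold distList opList at hψ
  rcases hψ with h | h
  · obtain ⟨p, -, rfl⟩ := List.mem_map.mp h
    by_cases hp : p.1 = p.2
    · rw [if_pos hp]
      exact BoundedFormula.realize_top.mpr trivial
    · rw [if_neg hp]
      rw [BoundedFormula.realize_not, BoundedFormula.realize_bdEqual]
      simp only [tvar, Term.realize_var, Sum.elim_inr, Equiv.symm_apply_apply]
      exact fun hv => hp (Subtype.ext hv)
  · obtain ⟨a, -, h⟩ := List.mem_flatMap.mp h
    obtain ⟨p, -, rfl⟩ := List.mem_map.mp h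
    by_cases hc : canonOp C i a.1.2 p.1 = some p.2
    · rw [if_pos hc]
      rw [BoundedFormula.realize_bdEqual]
      simp only [tvar, Term.realize_func, Term.realize_var, Sum.elim_inr,
        Equiv.symm_apply_apply]
      exact (canonOp_val hc).symm
    · rw [if_neg hc]
      rw [BoundedFormula.realize_not, BoundedFormula.realize_bdEqual]
      simp only [tvar, Term.realize_func, Term.realize_var, Sum.elim_inr,
        Equiv.symm_apply_apply]
      intro hv
      rcases hop : canonOp C i a.1.2 p.1 with _ | z
      · exact canonOp_none hop (hv ▸ p.2.2)
      · exact hc (hop.trans (congrArg some (Subtype.ext ((canonOp_val hop).trans hv))))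

theorem realizes_of_realize {B : Type*} [L.Structure B] {i : CIdx L C}
    {v : Empty → B} {xs : Fin (Fintype.card {c : C // c ∈ i.1}) → B}
    (hxs : (diagFml C i).Realize v xs) :
    (canonSystem C).Realizes i B := by
  classical
  rw [diagFml, realize_listConj] at hxs
  show ∃ h : {c : C // c ∈ i.1} → B, Function.Injective h ∧
    ∀ {n : ℕ} (f : L.Functions n), (⟨n, f⟩ : Σ n, L.Functions n) ∈ i.2 →
      ∀ (x : Fin n → {c : C // c ∈ i.1}),
      (∀ y : {c : C // c ∈ i.1}, canonOp C i f x = some y →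
        funMap f (fun k => h (x k)) = h y) ∧
      (canonOp C i f x = none → ∀ y : {c : C // c ∈ i.1},
        funMap f (fun k => h (x k)) ≠ h y)
  refine ⟨fun a => xs (Fintype.equivFin _ a), ?_, ?_⟩
  · intro a b hab
    by_contra hne
    have hmem : (if a = b then (⊤ : L.BoundedFormula Empty
        (Fintype.card {c : C // c ∈ i.1})) else
        (Term.bdEqual (tvar C i a) (tvar C i b)).not) ∈
          distList C i ++ opList C i := by
      refine List.mem_append_left _ ?_
      unfold distList
      exact List.mem_map.mpr ⟨(a, b), Finset.mem_toList.mpr (Finset.mem_univ _), rfl⟩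
    have hr := hxs _ hmem
    rw [if_neg hne] at hr
    rw [BoundedFormula.realize_not, BoundedFormula.realize_bdEqual] at hr
    simp only [tvar, Term.realize_var, Sum.elim_inr] at hr
    exact hr hab
  · intro n f hf g
    have conj : ∀ y : {c : C // c ∈ i.1},
        (if canonOp C i f g = some y then
          Term.bdEqual (Term.func f fun k => tvar C i (g k)) (tvar C i y)
        else
          (Term.bdEqual (Term.func f fun k => tvar C i (g k)) (tvar C i y)).not) ∈
            distList C i ++ opList C i := by
      intro y
      refine List.mem_append_right _ ?_
      unfold opList
      refine List.mem_flatMap.mpr ⟨⟨⟨n, f⟩, hf⟩,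
        Finset.mem_toList.mpr (Finset.mem_attach _ _), ?_⟩
      exact List.mem_map.mpr ⟨(g, y), Finset.mem_toList.mpr (Finset.mem_univ _), rfl⟩
    constructor
    · intro y hy
      have hr := hxs _ (conj y)
      rw [if_pos hy] at hr
      rw [BoundedFormula.realize_bdEqual] at hr
      simpa only [tvar, Term.realize_func, Term.realize_var, Sum.elim_inr] using hr
    · intro hnone y
      have hr := hxs _ (conj y)
      rw [if_neg (by rw [hnone]; exact fun h => nomatch h)] at hr
      rw [BoundedFormula.realize_not, BoundedFormula.realize_bdEqual] at hr
      simpa only [tvar, Term.realize_func, Term.realize_var, Sum.elim_inr] using hr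

end Canonical




/-- Let `B` and `C` be `L`-algebras in a functional language `L`.  If every
existential sentence true in `C` is true in `B` (`Th_∃(B) ⊇ Th_∃(C)`), then `C` is isomorphic to
a limit algebra over `B`: there is a direct system `Λ` of diagram-formulas, each realizable in
`B`, with `C ≅ L(Λ)`. -/
theorem isomorphic_to_limit_algebra_of_existential {L : FirstOrder.Language.{u, v}}
    [∀ k, IsEmpty (L.Relations k)]
    (B : Type x) [L.Structure B] (C : Type x) [L.Structure C]
    (hex : ∀ (n : ℕ) (ψ : L.BoundedFormula Empty n),
      ψ.IsQF → C ⊨ ψ.exs → B ⊨ ψ.exs) :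
    ∃ (I : Type (max u x)) (pre : Preorder I)
      (Λ : @DiagramSystem.{u, v, max u x, x} L I pre),
      (∀ i : I, @DiagramSystem.Realizes L I pre Λ i B _) ∧
      Nonempty (@FirstOrder.Language.Equiv L C (@DiagramSystem.Limit L I pre Λ) _
        (@DiagramSystem.limitStructure L I pre Λ)) := by
  classical
  refine ⟨CIdx L C, inferInstance, canonSystem C, ?_, ?_⟩
  · intro i
    have hC : C ⊨ (diagFml C i).exs :=
      BoundedFormula.realize_exs.mpr ⟨_, diagFml_realize_self C i _⟩
    have hB := hex _ (diagFml C i) (diagFml_isQF C i) hC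
    obtain ⟨xs, hxs⟩ := BoundedFormula.realize_exs.mp hB
    exact realizes_of_realize C hxs
  · -- the isomorphism with the limit algebra
    letI : L.Structure (canonSystem (L := L) C).Limit := (canonSystem C).limitStructure
    let ι : C → (canonSystem (L := L) C).Limit := fun c =>
      Quotient.mk (canonSystem C).limSetoid ⟨({c}, ∅), ⟨c, Finset.mem_singleton_self c⟩⟩
    have key : ∀ p : Σ j, (canonSystem (L := L) C).X j,
        Quotient.mk (canonSystem C).limSetoid p = ι p.2.1 := by
      rintro ⟨j, z⟩
      refine Quotient.sound ⟨j, le_refl j,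
        ⟨Finset.singleton_subset_iff.mpr z.2, Finset.empty_subset _⟩, ?_⟩
      exact Subtype.ext rfl
    have hinj : Function.Injective ι := by
      intro c d h
      obtain ⟨k, h1, h2, e⟩ := Quotient.exact h
      exact congrArg Subtype.val e
    have hsurj : Function.Surjective ι := by
      intro q
      obtain ⟨p, rfl⟩ := Quot.exists_rep q
      exact ⟨p.2.1, (key p).symm⟩
    refine ⟨{ toEquiv := Equiv.ofBijective ι ⟨hinj, hsurj⟩, map_fun' := ?_, map_rel' := ?_ }⟩
    · intro n f x
      show ι (funMap f x) =
        @funMap L _ (canonSystem C).limitStructure n f (ι ∘ x)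
      obtain ⟨hf, g, hgk, hop⟩ :=
        ((canonSystem C).exists_funWitness f (ι ∘ x)).choose_spec
      have hgv : ∀ k, ((g k).1 : C) = x k := fun k => hinj ((key _).symm.trans (hgk k))
      have hv := canonOp_val hop
      have hval : ((((canonSystem C).exists_funWitness f (ι ∘ x)).choose.2).1 : C)
          = funMap f x := hv.trans (congrArg (funMap f) (funext hgv))
      have hdef : @funMap L _ (canonSystem C).limitStructure n f (ι ∘ x) =
          Quotient.mk (canonSystem C).limSetoid
            ((canonSystem C).exists_funWitness f (ι ∘ x)).choose := rfl
      rw [hdef, key, hval]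
    · intro n r x
      exact isEmptyElim r


end UAG
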